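/- Let G be a countable amenable group and X a subshift over a finite alphabet with |alphabet| = l, with h(X) > log k for an integer k ≥ 2, and suppose X has the gluing property with gluing distance D. Suppose moreover there exists a tiling T₀ of G with shapes S satisfying |S \ S_D| < ((γ−1) log_l k)|S| and N_S(X) > k^{γ|S|} for some fixed 1 < γ < h(X)/log k, such that the orbit-closure subshift X_{T₀} has entropy zero. Then the product subshift X̃ = X × X_{T₀} has h(X̃) = h(X) and admits a continuous shift-commuting surjection onto the full shift {1,…,k}^G. -/

import Mathlib

open scoped Pointwise symmDiff

/-- The number of blocks with domain `T` occurring in `X ⊆ Λ^G`. -/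
noncomputable def blockCount {G Λ : Type*} (X : Set (G → Λ)) (T : Finset G) : ℕ :=
  Nat.card ((fun x : G → Λ => fun t : ↥T => x t) '' X)

/-- A tiling of a group `G` with shapes `S 0, …, S (k₀-1)`. -/
structure Tiling (G : Type*) [Group G] [DecidableEq G] (k₀ : ℕ) (S : Fin k₀ → Finset G) where
  tiles : Set (Finset G)
  pairwise_disjoint : ∀ T₁ ∈ tiles, ∀ T₂ ∈ tiles, T₁ ≠ T₂ → Disjoint T₁ T₂
  covers : ∀ g : G, ∃ T ∈ tiles, g ∈ T
  shape : ∀ T ∈ tiles, ∃! p : Fin k₀ × G, T = (S p.1).image (fun s => s * p.2)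

/-- The `D`-core of a finite set `T`: `{t ∈ T : D t ⊆ T}`. -/
def core {G : Type*} [Group G] [DecidableEq G] (D T : Finset G) : Finset G :=
  T.filter (fun t => ∀ d ∈ D, d * t ∈ T)

/-- `x` is the symbolic point induced by the tiling `𝒯`. -/
def encodes {G : Type*} [Group G] [DecidableEq G] {k₀ : ℕ} {S : Fin k₀ → Finset G}
    (𝒯 : Tiling G k₀ S) (x : G → Fin (k₀+1)) : Prop :=
  ∀ g : G, ∀ j : Fin k₀, x g = j.succ ↔ (S j).image (fun s => s * g) ∈ 𝒯.tiles

/-! ### Auxiliary lemmas -/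

section Aux
variable {G Λ : Type*}

/-- closure approximation in a product of discrete spaces -/
lemma approx_mem_closure {A : Type*} [TopologicalSpace A] [DiscreteTopology A]
    (O : Set (G → A)) (y : G → A) (hy : y ∈ closure O) (E : Finset G) :
    ∃ o ∈ O, ∀ u ∈ E, o u = y u := by
  have hopen : IsOpen {y' : G → A | ∀ u ∈ E, y' u = y u} := by
    have he : {y' : G → A | ∀ u ∈ E, y' u = y u} = Set.pi ↑E (fun u => {y u}) := by
      ext f; simp [Set.pi]
    rw [he]
    exact isOpen_set_pi E.finite_toSet (fun a _ => isOpen_discrete _)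
  obtain ⟨o, ho1, ho2⟩ := mem_closure_iff.mp hy _ hopen (by simp)
  exact ⟨o, ho2, ho1⟩

lemma blockCount_le [Fintype Λ] (X : Set (G → Λ)) (T : Finset G) :
    blockCount X T ≤ (Fintype.card Λ) ^ T.card := by
  classical
  have h1 : blockCount X T ≤ Nat.card (↥T → Λ) :=
    Nat.card_le_card_of_injective _ Subtype.val_injective
  rwa [Nat.card_eq_fintype_card, Fintype.card_fun, Fintype.card_coe] at h1

lemma blockCount_pos [Finite Λ] (X : Set (G → Λ)) (hX : X.Nonempty) (T : Finset G) :
    0 < blockCount X T := by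
  have h1 := (hX.image (fun x : G → Λ => fun t : ↥T => x t)).to_subtype
  exact Nat.card_pos

lemma blockCount_le_mul [Fintype Λ] [DecidableEq G] (X : Set (G → Λ)) (C T : Finset G)
    (hCT : C ⊆ T) :
    blockCount X T ≤ blockCount X C * (Fintype.card Λ) ^ (T \ C).card := by
  classical
  set imT := (fun x : G → Λ => fun t : ↥T => x t) '' X with himT
  set imC := (fun x : G → Λ => fun t : ↥C => x t) '' X with himC
  have hf : ∀ B : ↥imT, (fun t : ↥C => (B : ↥T → Λ) ⟨t, hCT t.2⟩) ∈ imC := by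
    rintro ⟨B, x, hx, rfl⟩
    exact ⟨x, hx, rfl⟩
  set f : ↥imT → ↥imC × ((↥(T \ C) : Type _) → Λ) :=
    fun B => (⟨_, hf B⟩, fun t : ↥(T \ C) => (B : ↥T → Λ) ⟨t, Finset.sdiff_subset t.2⟩) with hfdef
  have hinj : Function.Injective f := by
    rintro ⟨B, hB⟩ ⟨B', hB'⟩ hEq
    have h1 := congrArg (fun q => (q.1 : ↥C → Λ)) hEq
    have h2 := congrArg Prod.snd hEq
    simp only [hfdef] at h1 h2
    ext ⟨t, ht⟩
    by_cases htc : t ∈ C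
    · exact congrFun h1 ⟨t, htc⟩
    · exact congrFun h2 ⟨t, Finset.mem_sdiff.mpr ⟨ht, htc⟩⟩
  calc blockCount X T = Nat.card ↥imT := rfl
    _ ≤ Nat.card (↥imC × ((↥(T \ C) : Type _) → Λ)) := Nat.card_le_card_of_injective f hinj
    _ = blockCount X C * (Fintype.card Λ) ^ (T \ C).card := by
        rw [Nat.card_prod, Nat.card_eq_fintype_card (α := (↥(T \ C) : Type _) → Λ),
          Fintype.card_fun, Fintype.card_coe]
        rfl

lemma exists_surj_aux {α β : Type*} [Finite α] [Finite β] [Nonempty β] (Aset : Set α)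
    (hcard : Nat.card β ≤ Nat.card ↥Aset) :
    ∃ f : α → β, ∀ v : β, ∃ a ∈ Aset, f a = v := by
  classical
  cases nonempty_fintype β
  have : Fintype ↥Aset := Fintype.ofFinite _
  have hcard' : Fintype.card β ≤ Fintype.card ↥Aset := by
    rwa [Nat.card_eq_fintype_card, Nat.card_eq_fintype_card] at hcard
  obtain ⟨ι⟩ := Function.Embedding.nonempty_of_card_le hcard'
  refine ⟨fun a => if h : ∃ v : β, ((ι v : ↥Aset) : α) = a then h.choose else Classical.arbitrary β,
    fun v => ⟨(ι v : ↥Aset), (ι v).2, ?_⟩⟩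
  have hex : ∃ v' : β, ((ι v' : ↥Aset) : α) = ((ι v : ↥Aset) : α) := ⟨v, rfl⟩
  simp only [dif_pos hex]
  exact ι.injective (Subtype.val_injective hex.choose_spec)

lemma blockCount_prod {K : Type*} (X : Set (G → Λ)) (Y : Set (G → K)) (T : Finset G) :
    blockCount {z : G → Λ × K | (fun g => (z g).1) ∈ X ∧ (fun g => (z g).2) ∈ Y} T
      = blockCount X T * blockCount Y T := by
  classical
  set Xt := {z : G → Λ × K | (fun g => (z g).1) ∈ X ∧ (fun g => (z g).2) ∈ Y} with hXt
  set imZ := (fun z : G → Λ × K => fun t : ↥T => z t) '' Xt with himZ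
  set imX := (fun x : G → Λ => fun t : ↥T => x t) '' X with himX
  set imY := (fun y : G → K => fun t : ↥T => y t) '' Y with himY
  set e : ((↥T : Type _) → Λ × K) ≃ ((↥T : Type _) → Λ) × ((↥T : Type _) → K) :=
    Equiv.arrowProdEquivProdArrow ↥T (fun _ => Λ) (fun _ => K) with he
  have him : e '' imZ = imX ×ˢ imY := by
    ext q
    constructor
    · rintro ⟨B, ⟨z, hz, rfl⟩, rfl⟩
      exact ⟨⟨_, hz.1, rfl⟩, ⟨_, hz.2, rfl⟩⟩
    · rintro ⟨⟨x, hx, hxq⟩, ⟨y, hy, hyq⟩⟩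
      refine ⟨fun t => ((fun g => (x g, y g)) : G → Λ × K) t,
        ⟨fun g => (x g, y g), ⟨hx, hy⟩, rfl⟩, ?_⟩
      simp only [he, Equiv.arrowProdEquivProdArrow]
      exact Prod.ext (by simp [← hxq]) (by simp [← hyq])
  have h1 : blockCount Xt T = Nat.card ↥(e '' imZ) := by
    unfold blockCount
    rw [Nat.card_image_of_injective e.injective]
  rw [h1, him, Nat.card_congr (Equiv.Set.prod imX imY), Nat.card_prod]
  rfl

end Aux

lemma count_core {G Λ : Type*} [Group G] [DecidableEq G] [Fintype Λ]
    (X : Set (G → Λ)) (hXne : X.Nonempty) (l k : ℕ) (hl : Fintype.card Λ = l) (hk : 2 ≤ k)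
    (γ : ℝ) (hγ1 : 1 < γ) (D : Finset G) (Sj : Finset G)
    (h1 : ((Sj \ core D Sj).card : ℝ) < ((γ - 1) * Real.logb l k) * (Sj.card : ℝ))
    (h2 : ((blockCount X Sj : ℝ)) > (k : ℝ) ^ (γ * (Sj.card : ℝ))) :
    k ^ Sj.card < blockCount X (core D Sj) := by
  have hkR : (1:ℝ) < (k:ℝ) := by exact_mod_cast hk.trans_lt' one_lt_two
  have hk0 : (0:ℝ) < (k:ℝ) := lt_trans one_pos hkR
  have hone : (1:ℝ) ≤ (k:ℝ) ^ (γ * (Sj.card : ℝ)) := by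
    have h0 : ((k:ℝ)) ^ (0:ℝ) ≤ (k:ℝ) ^ (γ * (Sj.card : ℝ)) :=
      Real.rpow_le_rpow_of_exponent_le hkR.le
        (mul_nonneg (by linarith) (Nat.cast_nonneg _))
    simpa [Real.rpow_zero] using h0
  have hbc1 : (1:ℝ) < (blockCount X Sj : ℝ) := lt_of_le_of_lt hone h2
  have hbound : blockCount X Sj ≤ l ^ Sj.card := hl ▸ blockCount_le X Sj
  have hs0 : 0 < Sj.card := by
    rcases Nat.eq_zero_or_pos Sj.card with h | h
    · exfalso
      rw [h, pow_zero] at hbound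
      have : (blockCount X Sj : ℝ) ≤ 1 := by exact_mod_cast hbound
      linarith
    · exact h
  have hl2 : 2 ≤ l := by
    by_contra hcon
    push_neg at hcon
    have hle : l ^ Sj.card ≤ 1 := by
      calc l ^ Sj.card ≤ 1 ^ Sj.card := Nat.pow_le_pow_left (by omega) _
        _ = 1 := one_pow _
    have : (blockCount X Sj : ℝ) ≤ 1 := by exact_mod_cast hbound.trans hle
    linarith
  have hlR : (1:ℝ) < (l:ℝ) := by exact_mod_cast hl2.trans_lt' one_lt_two
  have hl0 : (0:ℝ) < (l:ℝ) := lt_trans one_pos hlR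
  set d := (Sj \ core D Sj).card
  set s := Sj.card
  have e1 : ((l:ℝ)) ^ ((d : ℕ) : ℝ) < (l:ℝ) ^ (((γ-1) * Real.logb l k) * (s:ℝ)) :=
    Real.rpow_lt_rpow_of_exponent_lt hlR h1
  have e2 : (l:ℝ) ^ (((γ-1) * Real.logb l k) * (s:ℝ)) = (k:ℝ) ^ ((γ-1) * (s:ℝ)) := by
    rw [show ((γ-1) * Real.logb l k) * (s:ℝ) = Real.logb l k * ((γ-1) * (s:ℝ)) by ring,
      Real.rpow_mul hl0.le, Real.rpow_logb hl0 hlR.ne' hk0]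
  have hC0 : (0:ℝ) < (blockCount X (core D Sj) : ℝ) := by
    exact_mod_cast blockCount_pos X hXne _
  have e3 : (blockCount X Sj : ℝ) ≤ (blockCount X (core D Sj) : ℝ) * (l:ℝ) ^ ((d:ℕ) : ℝ) := by
    rw [Real.rpow_natCast]
    exact_mod_cast hl ▸ blockCount_le_mul X (core D Sj) Sj (Finset.filter_subset _ _)
  have e4 : (k:ℝ) ^ (γ * (s:ℝ)) <
      (blockCount X (core D Sj) : ℝ) * (k:ℝ) ^ ((γ-1) * (s:ℝ)) := by
    calc (k:ℝ) ^ (γ * (s:ℝ)) < (blockCount X Sj : ℝ) := h2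
      _ ≤ (blockCount X (core D Sj) : ℝ) * (l:ℝ) ^ ((d:ℕ):ℝ) := e3
      _ < (blockCount X (core D Sj) : ℝ) * (k:ℝ) ^ ((γ-1) * (s:ℝ)) :=
          mul_lt_mul_of_pos_left (e1.trans_eq e2) hC0
  have e5 : (k:ℝ) ^ (γ * (s:ℝ)) = (k:ℝ) ^ ((s:ℝ)) * (k:ℝ) ^ ((γ-1) * (s:ℝ)) := by
    rw [← Real.rpow_add hk0]
    ring_nf
  have e6 : (k:ℝ) ^ ((s:ℝ)) < (blockCount X (core D Sj) : ℝ) := by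
    have hA : (0:ℝ) < (k:ℝ) ^ ((γ-1) * (s:ℝ)) := Real.rpow_pos_of_pos hk0 _
    have h4 := e4
    rw [e5] at h4
    exact lt_of_mul_lt_mul_right h4 hA.le
  have : ((k ^ s : ℕ) : ℝ) < (blockCount X (core D Sj) : ℝ) := by
    rwa [Nat.cast_pow, ← Real.rpow_natCast (k:ℝ) s]
  exact_mod_cast this

/-- `p = (j, c)` is a tile-center for position `g` in the symbolic point `y`. -/
def centerAt {G : Type*} [Group G] [DecidableEq G] {k₀ : ℕ} (S : Fin k₀ → Finset G)
    (y : G → Fin (k₀+1)) (g : G) (p : Fin k₀ × G) : Prop :=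
  y p.2 = p.1.succ ∧ g ∈ (S p.1).image (fun s => s * p.2)

lemma centerAt_mem {G : Type*} [Group G] [DecidableEq G] {k₀ : ℕ} {S : Fin k₀ → Finset G}
    {y : G → Fin (k₀+1)} {g : G} {p : Fin k₀ × G} (hp : centerAt S y g p) :
    g * p.2⁻¹ ∈ S p.1 := by
  obtain ⟨s, hs, he⟩ := Finset.mem_image.mp hp.2
  rw [← he, mul_inv_cancel_right]; exact hs

open Classical in
noncomputable def phiDef {G Λ : Type*} [Group G] [DecidableEq G] {k₀ k : ℕ}
    (S : Fin k₀ → Finset G) (D : Finset G) (hk : 0 < k)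
    (Ψ : ∀ j : Fin k₀, ((↥(core D (S j)) : Type _) → Λ) → ((↥(S j) : Type _) → Fin k))
    (z : G → Λ × Fin (k₀+1)) (g : G) : Fin k :=
  if h : ∃! p : Fin k₀ × G, centerAt S (fun u => (z u).2) g p then
    Ψ h.choose.1 (fun t => (z (↑t * h.choose.2)).1)
      ⟨g * h.choose.2⁻¹, centerAt_mem h.choose_spec.1⟩
  else ⟨0, hk⟩

lemma phiDef_eq {G Λ : Type*} [Group G] [DecidableEq G] {k₀ k : ℕ}
    (S : Fin k₀ → Finset G) (D : Finset G) (hk : 0 < k)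
    (Ψ : ∀ j : Fin k₀, ((↥(core D (S j)) : Type _) → Λ) → ((↥(S j) : Type _) → Fin k))
    (z : G → Λ × Fin (k₀+1)) (g : G)
    (h : ∃! p : Fin k₀ × G, centerAt S (fun u => (z u).2) g p)
    {p : Fin k₀ × G} (hp : centerAt S (fun u => (z u).2) g p) :
    phiDef S D hk Ψ z g =
      Ψ p.1 (fun t => (z (↑t * p.2)).1) ⟨g * p.2⁻¹, centerAt_mem hp⟩ := by
  unfold phiDef
  classical
  rw [dif_pos h]
  obtain rfl : p = h.choose := h.choose_spec.2 p hp
  rfl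

theorem stmt16 {G Λ : Type*} [Group G] [Countable G] [DecidableEq G]
    [Fintype Λ] [TopologicalSpace Λ] [DiscreteTopology Λ]
    (l : ℕ) (hl : Fintype.card Λ = l)
    -- a Følner sequence for the countable amenable group G
    (F : ℕ → Finset G) (hFne : ∀ m, (F m).Nonempty)
    (hFolner : ∀ g : G, Filter.Tendsto
      (fun m => ((((F m).image (fun h => g * h)) ∆ (F m)).card : ℝ) / (F m).card)
      Filter.atTop (nhds 0))
    -- X is a subshift
    (X : Set (G → Λ)) (hXne : X.Nonempty) (hXcl : IsClosed X)
    (hXinv : ∀ (g : G), ∀ x ∈ X, (fun h => x (h * g)) ∈ X)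
    -- entropy of X
    (hX : ℝ)
    (hXent : Filter.Tendsto (fun m => Real.log (blockCount X (F m)) / (F m).card)
      Filter.atTop (nhds hX))
    (k : ℕ) (hk : 2 ≤ k) (hXk : hX > Real.log k)
    -- gluing property with gluing distance D
    (D : Finset G) (hD : (1 : G) ∈ D)
    (hglue : ∀ (T₁ T₂ : Finset G), Disjoint T₂ (D * T₁) →
      ∀ (A : ↥T₁ → Λ) (B : ↥T₂ → Λ),
        (∃ x ∈ X, ∀ t : ↥T₁, x t = A t) → (∃ x ∈ X, ∀ t : ↥T₂, x t = B t) →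
        ∃ x ∈ X, (∀ t : ↥T₁, x t = A t) ∧ (∀ t : ↥T₂, x t = B t))
    -- the parameter γ
    (γ : ℝ) (hγ1 : 1 < γ) (hγ2 : γ * Real.log k < hX)
    -- the tiling 𝒯₀ and the conditions on its shapes
    (k₀ : ℕ) (S : Fin k₀ → Finset G) (𝒯₀ : Tiling G k₀ S)
    (hshape1 : ∀ j, (((S j) \ core D (S j)).card : ℝ) <
      ((γ - 1) * Real.logb l k) * ((S j).card : ℝ))
    (hshape2 : ∀ j, ((blockCount X (S j) : ℝ)) > (k : ℝ) ^ (γ * ((S j).card : ℝ)))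
    -- the orbit-closure subshift Y = X_{𝒯₀} and its zero entropy
    (x₀ : G → Fin (k₀+1)) (hx₀ : encodes 𝒯₀ x₀)
    (Y : Set (G → Fin (k₀+1)))
    (hY : Y = closure {y | ∃ g : G, y = fun h => x₀ (h * g)})
    (hYent : Filter.Tendsto (fun m => Real.log (blockCount Y (F m)) / (F m).card)
      Filter.atTop (nhds 0)) :
    -- the product subshift X̃ has entropy hX and factors onto the full shift over k symbols
    Filter.Tendsto (fun m => Real.log (blockCount
        {z : G → Λ × Fin (k₀+1) | (fun g => (z g).1) ∈ X ∧ (fun g => (z g).2) ∈ Y}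
        (F m)) / (F m).card)
      Filter.atTop (nhds hX) ∧
    ∃ φ : (G → Λ × Fin (k₀+1)) → (G → Fin k),
      ContinuousOn φ
        {z : G → Λ × Fin (k₀+1) | (fun g => (z g).1) ∈ X ∧ (fun g => (z g).2) ∈ Y} ∧
      (∀ z ∈ {z : G → Λ × Fin (k₀+1) |
          (fun g => (z g).1) ∈ X ∧ (fun g => (z g).2) ∈ Y},
        ∀ g : G, φ (fun h => z (h * g)) = fun h => φ z (h * g)) ∧
      (∀ y : G → Fin k, ∃ z ∈ {z : G → Λ × Fin (k₀+1) |
          (fun g => (z g).1) ∈ X ∧ (fun g => (z g).2) ∈ Y}, φ z = y) := by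
  classical
  have hx₀Y : x₀ ∈ Y := by
    rw [hY]
    exact subset_closure ⟨1, by funext u; rw [mul_one]⟩
  have hYne : Y.Nonempty := ⟨x₀, hx₀Y⟩
  constructor
  · -- Part 1: entropy of the product
    have hlog : ∀ m, Real.log (blockCount
        {z : G → Λ × Fin (k₀+1) | (fun g => (z g).1) ∈ X ∧ (fun g => (z g).2) ∈ Y} (F m))
        = Real.log (blockCount X (F m)) + Real.log (blockCount Y (F m)) := by
      intro m
      rw [blockCount_prod, Nat.cast_mul, Real.log_mul]
      · exact_mod_cast (blockCount_pos X hXne (F m)).ne'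
      · exact_mod_cast (blockCount_pos Y hYne (F m)).ne'
    have htend := hXent.add hYent
    rw [add_zero] at htend
    refine Filter.Tendsto.congr (fun m => ?_) htend
    rw [← add_div, ← hlog m]
  · -- Part 2: the factor map onto the full shift
    have kpos : 0 < k := by omega
    haveI : Nonempty (Fin k) := ⟨⟨0, kpos⟩⟩
    -- the block-coding surjections Ψ j
    have hsur : ∀ j : Fin k₀,
        ∃ Ψj : ((↥(core D (S j)) : Type _) → Λ) → ((↥(S j) : Type _) → Fin k),
        ∀ v : (↥(S j) : Type _) → Fin k,
          ∃ B ∈ (fun x : G → Λ => fun t : ↥(core D (S j)) => x t) '' X, Ψj B = v := by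
      intro j
      apply exists_surj_aux
      have hcount := count_core X hXne l k hl hk γ hγ1 D (S j) (hshape1 j) (hshape2 j)
      rw [Nat.card_eq_fintype_card, Fintype.card_fun, Fintype.card_coe, Fintype.card_fin]
      exact hcount.le
    choose Ψ hΨ using hsur
    -- centers of tile-translates for orbit points
    have stepA : ∀ (h g : G), ∃! p : Fin k₀ × G, centerAt S (fun u => x₀ (u * h)) g p := by
      intro h g
      obtain ⟨T, hT, hgT⟩ := 𝒯₀.covers (g * h)
      obtain ⟨⟨j, c₀⟩, hTp, huniq⟩ := 𝒯₀.shape T hT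
      refine ⟨(j, c₀ * h⁻¹), ⟨?_, ?_⟩, ?_⟩
      · show x₀ ((c₀ * h⁻¹) * h) = j.succ
        rw [inv_mul_cancel_right]
        exact (hx₀ c₀ j).mpr (by rw [← hTp]; exact hT)
      · rw [hTp] at hgT
        obtain ⟨s, hs, he⟩ := Finset.mem_image.mp hgT
        exact Finset.mem_image.mpr ⟨s, hs, by
          show s * (c₀ * h⁻¹) = g
          rw [← mul_assoc, he, mul_inv_cancel_right]⟩
      · rintro ⟨j', c'⟩ ⟨hy', hm'⟩
        have ht' : (S j').image (fun s => s * (c' * h)) ∈ 𝒯₀.tiles := (hx₀ (c' * h) j').mp hy'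
        have hgh : g * h ∈ (S j').image (fun s => s * (c' * h)) := by
          obtain ⟨s, hs, he⟩ := Finset.mem_image.mp hm'
          exact Finset.mem_image.mpr ⟨s, hs, by rw [← mul_assoc, he]⟩
        have hTT : T = (S j').image (fun s => s * (c' * h)) := by
          by_contra hne
          exact (Finset.disjoint_left.mp
            (𝒯₀.pairwise_disjoint T hT _ ht' hne) hgT) hgh
        have heq := huniq (j', c' * h) hTT
        have hj : j' = j := congrArg Prod.fst heq
        have hc : c' * h = c₀ := congrArg Prod.snd heq
        refine Prod.ext hj ?_
        show c' = c₀ * h⁻¹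
        rw [← hc, mul_inv_cancel_right]
    -- approximation of points of Y by orbit points
    have stepB : ∀ y ∈ Y, ∀ E : Finset G, ∃ h : G, ∀ u ∈ E, y u = x₀ (u * h) := by
      intro y hy E
      rw [hY] at hy
      obtain ⟨o, ⟨h, rfl⟩, ho⟩ := approx_mem_closure _ y hy E
      exact ⟨h, fun u hu => (ho u hu).symm⟩
    -- any candidate center of g lies in a fixed finite set
    have hcmem : ∀ (g : G) (p : Fin k₀ × G), g ∈ (S p.1).image (fun s => s * p.2) →
        p.2 ∈ Finset.univ.biUnion (fun j : Fin k₀ => (S j).image (fun s => s⁻¹ * g)) := by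
      rintro g ⟨j, c⟩ hm
      obtain ⟨s, hs, he⟩ := Finset.mem_image.mp hm
      refine Finset.mem_biUnion.mpr ⟨j, Finset.mem_univ _,
        Finset.mem_image.mpr ⟨s, hs, ?_⟩⟩
      show s⁻¹ * g = c
      rw [← he, inv_mul_cancel_left]
    -- every point of Y encodes a genuine tiling
    have stepC : ∀ y ∈ Y, ∀ g : G, ∃! p : Fin k₀ × G, centerAt S y g p := by
      intro y hy g
      obtain ⟨h, hh⟩ := stepB y hy
        (Finset.univ.biUnion (fun j : Fin k₀ => (S j).image (fun s => s⁻¹ * g)))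
      obtain ⟨p, hp, huniq⟩ := stepA h g
      have transfer : ∀ q : Fin k₀ × G,
          centerAt S y g q ↔ centerAt S (fun u => x₀ (u * h)) g q := by
        intro q
        constructor
        · rintro ⟨h1, h2⟩
          refine ⟨?_, h2⟩
          show x₀ (q.2 * h) = q.1.succ
          rw [← hh q.2 (hcmem g q h2)]
          exact h1
        · rintro ⟨h1, h2⟩
          refine ⟨?_, h2⟩
          rw [hh q.2 (hcmem g q h2)]
          exact h1
      exact ⟨p, (transfer p).mpr hp, fun q hq => huniq q ((transfer q).mp hq)⟩
    -- Y is shift invariant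
    have hYinv : ∀ g₀ : G, ∀ y ∈ Y, (fun u => y (u * g₀)) ∈ Y := by
      intro g₀ y hy
      rw [hY] at hy ⊢
      have hcont : Continuous (fun y' : G → Fin (k₀+1) => fun u => y' (u * g₀)) :=
        continuous_pi (fun u => continuous_apply (u * g₀))
      refine map_mem_closure hcont hy ?_
      rintro o ⟨h, rfl⟩
      exact ⟨g₀ * h, by funext u; simp [mul_assoc]⟩
    -- the locality window
    set EB : G → Finset G := fun g =>
      (Finset.univ.biUnion fun j : Fin k₀ => (S j).image (fun s => s⁻¹ * g)) ∪
      (Finset.univ.biUnion fun j : Fin k₀ => (S j).image (fun s => s⁻¹ * g)).biUnion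
        (fun c => Finset.univ.biUnion fun j : Fin k₀ =>
          (core D (S j)).image (fun t => t * c)) with hEB
    have hloc : ∀ (g : G) (z z' : G → Λ × Fin (k₀+1)),
        (fun u => (z u).2) ∈ Y → (fun u => (z' u).2) ∈ Y →
        (∀ u ∈ EB g, z u = z' u) →
        phiDef S D kpos Ψ z g = phiDef S D kpos Ψ z' g := by
      intro g z z' hz hz' hagree
      obtain ⟨p, hp, -⟩ := stepC _ hz g
      have hpmem : p.2 ∈ Finset.univ.biUnion
          (fun j : Fin k₀ => (S j).image (fun s => s⁻¹ * g)) := hcmem g p hp.2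
      have hp' : centerAt S (fun u => (z' u).2) g p := by
        refine ⟨?_, hp.2⟩
        have h5 := hagree p.2 (Finset.mem_union_left _ hpmem)
        show (z' p.2).2 = p.1.succ
        rw [← h5]
        exact hp.1
      rw [phiDef_eq S D kpos Ψ z g (stepC _ hz g) hp,
        phiDef_eq S D kpos Ψ z' g (stepC _ hz' g) hp']
      have hA : (fun t : ↥(core D (S p.1)) => (z (↑t * p.2)).1)
          = (fun t : ↥(core D (S p.1)) => (z' (↑t * p.2)).1) := by
        funext t
        have ht : (↑t * p.2) ∈ EB g := by
          refine Finset.mem_union_right _ (Finset.mem_biUnion.mpr ⟨p.2, hpmem,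
            Finset.mem_biUnion.mpr ⟨p.1, Finset.mem_univ _,
              Finset.mem_image.mpr ⟨↑t, t.2, rfl⟩⟩⟩)
        rw [hagree _ ht]
      rw [hA]
    refine ⟨phiDef S D kpos Ψ, ?_, ?_, ?_⟩
    · -- continuity
      intro z₀ hz₀
      apply continuousWithinAt_pi.mpr
      intro g
      have hV : IsOpen {z : G → Λ × Fin (k₀+1) | ∀ u ∈ EB g, z u = z₀ u} := by
        have he : {z : G → Λ × Fin (k₀+1) | ∀ u ∈ EB g, z u = z₀ u}
            = Set.pi ↑(EB g) (fun u => {z₀ u}) := by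
          ext f; simp [Set.pi]
        rw [he]
        exact isOpen_set_pi (EB g).finite_toSet (fun a _ => isOpen_discrete _)
      have hmem : {z : G → Λ × Fin (k₀+1) | ∀ u ∈ EB g, z u = z₀ u} ∈ nhds z₀ :=
        hV.mem_nhds (fun u _ => rfl)
      have hev : ∀ᶠ z in nhdsWithin z₀
          {z : G → Λ × Fin (k₀+1) | (fun g => (z g).1) ∈ X ∧ (fun g => (z g).2) ∈ Y},
          phiDef S D kpos Ψ z₀ g = phiDef S D kpos Ψ z g := by
        filter_upwards [nhdsWithin_le_nhds hmem, self_mem_nhdsWithin] with z hzV hzX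
        exact (hloc g z z₀ hzX.2 hz₀.2 hzV).symm
      exact Filter.Tendsto.congr' hev tendsto_const_nhds
    · -- equivariance
      intro z hz g₀
      funext g
      have hz' : (fun u => z (u * g₀)) ∈
          {z : G → Λ × Fin (k₀+1) | (fun g => (z g).1) ∈ X ∧ (fun g => (z g).2) ∈ Y} :=
        ⟨hXinv g₀ _ hz.1, hYinv g₀ _ hz.2⟩
      obtain ⟨p, hp, -⟩ := stepC _ hz.2 (g * g₀)
      have hp' : centerAt S (fun u => ((fun v => z (v * g₀)) u).2) g (p.1, p.2 * g₀⁻¹) := by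
        constructor
        · show (z ((p.2 * g₀⁻¹) * g₀)).2 = p.1.succ
          rw [inv_mul_cancel_right]
          exact hp.1
        · obtain ⟨s, hs, he⟩ := Finset.mem_image.mp hp.2
          exact Finset.mem_image.mpr ⟨s, hs, by
            show s * (p.2 * g₀⁻¹) = g
            rw [← mul_assoc, he, mul_inv_cancel_right]⟩
      rw [phiDef_eq S D kpos Ψ _ g (stepC _ hz'.2 g) hp',
        phiDef_eq S D kpos Ψ z (g * g₀) (stepC _ hz.2 (g * g₀)) hp]
      have hA : (fun t : ↥(core D (S (p.1, p.2 * g₀⁻¹).1)) =>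
            (z ((↑t * (p.1, p.2 * g₀⁻¹).2) * g₀)).1)
          = (fun t : ↥(core D (S p.1)) => (z (↑t * p.2)).1) := by
        funext t
        show (z ((↑t * (p.2 * g₀⁻¹)) * g₀)).1 = (z (↑t * p.2)).1
        rw [mul_assoc (↑t) (p.2 * g₀⁻¹) g₀, inv_mul_cancel_right]
      rw [hA]
      exact congrArg _ (Subtype.ext (by group))
    · -- surjectivity
      intro w
      -- choose, for every potential tile, an occurring core-block coding the right word
      have hBex : ∀ p : Fin k₀ × G, ∃ B : (↥(core D (S p.1)) : Type _) → Λ,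
          B ∈ (fun x : G → Λ => fun t : ↥(core D (S p.1)) => x t) '' X ∧
          Ψ p.1 B = (fun s : ↥(S p.1) => w (↑s * p.2)) := by
        intro p
        obtain ⟨B, hB1, hB2⟩ := hΨ p.1 (fun s : ↥(S p.1) => w (↑s * p.2))
        exact ⟨B, hB1, hB2⟩
      choose Bp hBp1 hBp2 using hBex
      -- simultaneously realize the chosen blocks over any finite set of tiles
      have claim : ∀ P : Finset (Fin k₀ × G), (∀ p ∈ P, x₀ p.2 = p.1.succ) →
          ∃ x ∈ X, ∀ p ∈ P, ∀ t : ↥(core D (S p.1)), x (↑t * p.2) = Bp p t := by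
        intro P
        induction P using Finset.induction_on with
        | empty =>
          intro _
          obtain ⟨x, hx⟩ := hXne
          exact ⟨x, hx, by simp⟩
        | @insert p P hpP ih =>
          intro hQ
          obtain ⟨x', hx', hreal⟩ := ih (fun q hq => hQ q (Finset.mem_insert_of_mem hq))
          set T₁ : Finset G := P.biUnion (fun q => (core D (S q.1)).image (fun t => t * q.2))
            with hT₁
          set T₂ : Finset G := (core D (S p.1)).image (fun t => t * p.2) with hT₂
          have htp : (S p.1).image (fun s => s * p.2) ∈ 𝒯₀.tiles :=
            (hx₀ p.2 p.1).mp (hQ p (Finset.mem_insert_self p P))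
          have hdisj : Disjoint T₂ (D * T₁) := by
            rw [Finset.disjoint_left]
            intro a haT₂ haDT₁
            obtain ⟨d, hd, b, hb, hab⟩ := Finset.mem_mul.mp haDT₁
            obtain ⟨q, hqP, hbq⟩ := Finset.mem_biUnion.mp hb
            obtain ⟨t, htq, hbt⟩ := Finset.mem_image.mp hbq
            have htileq : a ∈ (S q.1).image (fun s => s * q.2) := by
              have hdt : d * t ∈ S q.1 := (Finset.mem_filter.mp htq).2 d hd
              refine Finset.mem_image.mpr ⟨d * t, hdt, ?_⟩
              rw [mul_assoc, hbt, hab]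
            have htilep : a ∈ (S p.1).image (fun s => s * p.2) := by
              obtain ⟨u, hu, hue⟩ := Finset.mem_image.mp haT₂
              exact Finset.mem_image.mpr ⟨u, (Finset.mem_filter.mp hu).1, hue⟩
            have htq' : (S q.1).image (fun s => s * q.2) ∈ 𝒯₀.tiles :=
              (hx₀ q.2 q.1).mp (hQ q (Finset.mem_insert_of_mem hqP))
            have hne : (S p.1).image (fun s => s * p.2) ≠ (S q.1).image (fun s => s * q.2) := by
              intro hEq
              obtain ⟨pp, hpp, huniq⟩ := 𝒯₀.shape _ htp
              have h1 := huniq p rfl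
              have h2 := huniq q hEq
              exact hpP ((h1.trans h2.symm) ▸ hqP)
            exact (Finset.disjoint_left.mp
              (𝒯₀.pairwise_disjoint _ htp _ htq' hne) htilep) htileq
          obtain ⟨x₁, hx₁X, hx₁⟩ := hBp1 p
          obtain ⟨xg, hxgX, hA, hB⟩ := hglue T₁ T₂ hdisj
            (fun t : ↥T₁ => x' ↑t)
            (fun t : ↥T₂ => x₁ (↑t * p.2⁻¹))
            ⟨x', hx', fun t => rfl⟩
            ⟨fun u => x₁ (u * p.2⁻¹), hXinv p.2⁻¹ x₁ hx₁X, fun t => rfl⟩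
          refine ⟨xg, hxgX, ?_⟩
          intro q hq t
          rcases Finset.mem_insert.mp hq with hq | hq
          · subst hq
            have hm : (↑t * q.2) ∈ T₂ := Finset.mem_image.mpr ⟨↑t, t.2, rfl⟩
            rw [hB ⟨↑t * q.2, hm⟩]
            show x₁ ((↑t * q.2) * q.2⁻¹) = Bp q t
            rw [mul_inv_cancel_right, ← hx₁]
          · have hm : (↑t * q.2) ∈ T₁ := Finset.mem_biUnion.mpr
              ⟨q, hq, Finset.mem_image.mpr ⟨↑t, t.2, rfl⟩⟩
            rw [hA ⟨↑t * q.2, hm⟩]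
            exact hreal q hq t
      -- pass to the limit over all tiles
      have hCSne : Nonempty ↥{p : Fin k₀ × G | x₀ p.2 = p.1.succ} := by
        obtain ⟨p, hp, -⟩ := stepA 1 1
        refine ⟨⟨p, ?_⟩⟩
        have h5 : x₀ (p.2 * 1) = p.1.succ := hp.1
        rwa [mul_one] at h5
      obtain ⟨e, he⟩ := exists_surjective_nat ↥{p : Fin k₀ × G | x₀ p.2 = p.1.succ}
      set V : ℕ → Set (G → Λ) := fun n => X ∩ ⋂ (i : ℕ), ⋂ (_ : i ≤ n),
        ⋂ (t : ↥(core D (S ((e i : Fin k₀ × G)).1))),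
          {x : G → Λ | x (↑t * ((e i : Fin k₀ × G)).2) = Bp (e i : Fin k₀ × G) t} with hV
      have hVne : ∀ n, (V n).Nonempty := by
        intro n
        obtain ⟨x, hxX, hx⟩ := claim
          ((Finset.range (n+1)).image (fun i => (e i : Fin k₀ × G)))
          (fun q hq => by
            obtain ⟨i, hi, hie⟩ := Finset.mem_image.mp hq
            rw [← hie]; exact (e i).2)
        refine ⟨x, hxX, ?_⟩
        simp only [Set.mem_iInter]
        intro i hi t
        exact hx _ (Finset.mem_image.mpr ⟨i, Finset.mem_range.mpr (by omega), rfl⟩) t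
      have hVdec : ∀ n, V (n+1) ⊆ V n := by
        intro n x hx
        refine ⟨hx.1, ?_⟩
        have h2 := hx.2
        simp only [Set.mem_iInter] at h2 ⊢
        intro i hi t
        exact h2 i (by omega) t
      have hVcl : ∀ n, IsClosed (V n) := by
        intro n
        exact hXcl.inter (isClosed_iInter fun i => isClosed_iInter fun _ =>
          isClosed_iInter fun t => isClosed_eq (continuous_apply _) continuous_const)
      have hVcpt : IsCompact (V 0) := (hVcl 0).isCompact
      obtain ⟨x, hx⟩ := IsCompact.nonempty_iInter_of_sequence_nonempty_isCompact_isClosed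
        V hVdec hVne hVcpt hVcl
      have hxX : x ∈ X := (Set.mem_iInter.mp hx 0).1
      refine ⟨fun g => (x g, x₀ g), ⟨hxX, hx₀Y⟩, ?_⟩
      funext g
      have huniq : ∃! p : Fin k₀ × G,
          centerAt S (fun u => ((fun v => (x v, x₀ v)) u).2) g p := stepC x₀ hx₀Y g
      obtain ⟨p, hp, -⟩ := stepC x₀ hx₀Y g
      have hp : centerAt S (fun u => ((fun v => (x v, x₀ v)) u).2) g p := hp
      rw [phiDef_eq S D kpos Ψ _ g huniq hp]
      have hpCS : p ∈ {p : Fin k₀ × G | x₀ p.2 = p.1.succ} := hp.1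
      obtain ⟨i, hei⟩ := he ⟨p, hpCS⟩
      have hcon : ∀ t : ↥(core D (S p.1)), x (↑t * p.2) = Bp p t := by
        have h2 := (Set.mem_iInter.mp hx i).2
        simp only [Set.mem_iInter] at h2
        have h3 := h2 i le_rfl
        rw [hei] at h3
        exact h3
      rw [show (fun t : ↥(core D (S p.1)) => ((fun v => (x v, x₀ v)) (↑t * p.2)).1) = Bp p
        from funext hcon]
      rw [hBp2 p]
      show w ((g * p.2⁻¹) * p.2) = w g
      rw [inv_mul_cancel_right]
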